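/- Let F be a J-frame for a Krein space H with J-frame operator S and M_± = closed span{f_i : i ∈ I_±}. Then [Sf, f] > 0 for every nonzero f ∈ M₋^{[⊥]}, and [Sf, f] < 0 for every nonzero f ∈ M₊^{[⊥]}. -/

import Mathlib

noncomputable section

open scoped Classical

open Function

/-- The indefinite inner product `[x,y] = ⟨Jx, y⟩` induced by an operator `J`. -/
def kre {E : Type*} [NormedAddCommGroup E] [InnerProductSpace ℂ E]
    (J : E →L[ℂ] E) (x y : E) : ℂ := @inner ℂ _ _ (J x) y

/-- `J` is a fundamental symmetry: a selfadjoint unitary (involutive) operator. -/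
def IsFundSym {E : Type*} [NormedAddCommGroup E] [InnerProductSpace ℂ E] [CompleteSpace E]
    (J : E →L[ℂ] E) : Prop :=
  IsSelfAdjoint J ∧ J.comp J = ContinuousLinearMap.id ℂ E

/-- The J-orthogonal companion of a subspace. -/
def JorthCompanion {E : Type*} [NormedAddCommGroup E] [InnerProductSpace ℂ E]
    (J : E →L[ℂ] E) (S : Submodule ℂ E) : Submodule ℂ E where
  carrier := {x | ∀ s ∈ S, kre J x s = 0}
  zero_mem' := by intro s hs; simp [kre]
  add_mem' := by
    intro a b ha hb s hs
    have h1 := ha s hs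
    have h2 := hb s hs
    simp only [kre, map_add, inner_add_left] at h1 h2 ⊢
    rw [h1, h2, add_zero]
  smul_mem' := by
    intro c x hx s hs
    have h1 := hx s hs
    simp only [kre, map_smul, inner_smul_left] at h1 ⊢
    rw [h1, mul_zero]

/-- Uniformly J-positive subspace. -/
def UnifJPos {E : Type*} [NormedAddCommGroup E] [InnerProductSpace ℂ E]
    (J : E →L[ℂ] E) (S : Submodule ℂ E) : Prop :=
  ∃ α : ℝ, 0 < α ∧ ∀ x ∈ S, α * ‖x‖ ^ 2 ≤ (kre J x x).re

/-- Uniformly J-negative subspace. -/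
def UnifJNeg {E : Type*} [NormedAddCommGroup E] [InnerProductSpace ℂ E]
    (J : E →L[ℂ] E) (S : Submodule ℂ E) : Prop :=
  ∃ α : ℝ, 0 < α ∧ ∀ x ∈ S, (kre J x x).re ≤ -(α * ‖x‖ ^ 2)

/-- Maximal uniformly J-positive subspace. -/
def MaxUnifJPos {E : Type*} [NormedAddCommGroup E] [InnerProductSpace ℂ E]
    (J : E →L[ℂ] E) (S : Submodule ℂ E) : Prop :=
  UnifJPos J S ∧ ∀ S' : Submodule ℂ E, UnifJPos J S' → S ≤ S' → S' = S

/-- Maximal uniformly J-negative subspace. -/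
def MaxUnifJNeg {E : Type*} [NormedAddCommGroup E] [InnerProductSpace ℂ E]
    (J : E →L[ℂ] E) (S : Submodule ℂ E) : Prop :=
  UnifJNeg J S ∧ ∀ S' : Submodule ℂ E, UnifJNeg J S' → S ≤ S' → S' = S

/-- J-selfadjoint operator (with respect to the indefinite inner product of `J`). -/
def IsJSelfAdj {E : Type*} [NormedAddCommGroup E] [InnerProductSpace ℂ E]
    (J : E →L[ℂ] E) (A : E →L[ℂ] E) : Prop :=
  ∀ x y : E, kre J (A x) y = kre J x (A y)

/-- The J-order: `A ≤_J B` iff `B - A` is J-positive. -/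
def JLe {E : Type*} [NormedAddCommGroup E] [InnerProductSpace ℂ E]
    (J : E →L[ℂ] E) (A B : E →L[ℂ] E) : Prop :=
  ∀ x : E, 0 ≤ (kre J (B x - A x) x).re ∧ (kre J (B x - A x) x).im = 0

/-- The subspace of `ℓ²(I)` supported on a subset (given by a predicate) of `I`. -/
def suppSub {I : Type*} (A : I → Prop) : Submodule ℂ (lp (fun _ : I => ℂ) 2) where
  carrier := {x | ∀ i, ¬ A i → x i = 0}
  zero_mem' := by intro i _; rfl
  add_mem' := by
    intro a b ha hb i hi
    have : (↑(a + b) : ∀ i, ℂ) i = a i + b i := by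
      rw [lp.coeFn_add]; rfl
    simp [this, ha i hi, hb i hi]
  smul_mem' := by
    intro c x hx i hi
    have : (↑(c • x) : ∀ i, ℂ) i = c • x i := by
      rw [lp.coeFn_smul]; rfl
    simp [this, hx i hi]

variable {H : Type*} [NormedAddCommGroup H] [InnerProductSpace ℂ H] [CompleteSpace H]
variable {I : Type*} [DecidableEq I]

/-- `i` is a "positive index" for the family `f` w.r.t. `J`: `[f i, f i] ≥ 0`. -/
def posIdx {H : Type*} [NormedAddCommGroup H] [InnerProductSpace ℂ H]
    (J : H →L[ℂ] H) (f : I → H) (i : I) : Prop := 0 ≤ (kre J (f i) (f i)).re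

/-- The sign `σ_i = sgn [f i, f i]` (as a complex scalar, `+1` on `I₊` and `-1` on `I₋`). -/
def sgnv {H : Type*} [NormedAddCommGroup H] [InnerProductSpace ℂ H]
    (J : H →L[ℂ] H) (f : I → H) (i : I) : ℂ := if posIdx J f i then 1 else -1

/-- Closure of the span of the vectors of the family `h` with positive indices (signs taken
from the family `f`). -/
def posSpan {H : Type*} [NormedAddCommGroup H] [InnerProductSpace ℂ H]
    (J : H →L[ℂ] H) (f h : I → H) : Submodule ℂ H :=
  (Submodule.span ℂ {x | ∃ i, posIdx J f i ∧ h i = x}).topologicalClosure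

/-- Closure of the span of the vectors of the family `h` with negative indices. -/
def negSpan {H : Type*} [NormedAddCommGroup H] [InnerProductSpace ℂ H]
    (J : H →L[ℂ] H) (f h : I → H) : Submodule ℂ H :=
  (Submodule.span ℂ {x | ∃ i, ¬ posIdx J f i ∧ h i = x}).topologicalClosure

/-- A Bessel family in a Hilbert space. -/
def IsBessel {H : Type*} [NormedAddCommGroup H] [InnerProductSpace ℂ H]
    (g : I → H) : Prop :=
  ∃ β : ℝ, ∀ (x : H) (s : Finset I),
    ∑ i ∈ s, ‖@inner ℂ _ _ (g i) x‖ ^ 2 ≤ β * ‖x‖ ^ 2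

/-- `g` is a dual family for `f`: the signs coincide and the two indefinite
reconstruction formulas hold. -/
def IsDualFamily {H : Type*} [NormedAddCommGroup H] [InnerProductSpace ℂ H]
    (J : H →L[ℂ] H) (f g : I → H) : Prop :=
  (∀ i, Real.sign ((kre J (g i) (g i)).re) = Real.sign ((kre J (f i) (f i)).re)) ∧
  (∀ x : H, HasSum (fun i => (sgnv J f i * kre J x (f i)) • g i) x) ∧
  (∀ x : H, HasSum (fun i => (sgnv J f i * kre J x (g i)) • f i) x)


/-- `[Sf,f] > 0` for nonzero `f ∈ M₋^[⊥]` and `[Sf,f] < 0` for nonzero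
`f ∈ M₊^[⊥]`. -/
theorem jframe_S_definite_on_companions
    (J : H →L[ℂ] H) (hJ : IsFundSym J) (f : I → H)
    (T : lp (fun _ : I => ℂ) 2 →L[ℂ] H)
    (hT : ∀ i, T (lp.single 2 i (1:ℂ)) = f i)
    (hTsurj : Function.Surjective T)
    (Pp Pm : lp (fun _ : I => ℂ) 2 →L[ℂ] lp (fun _ : I => ℂ) 2)
    (hPp : ∀ (x : lp (fun _ : I => ℂ) 2) (i : I), Pp x i = if posIdx J f i then x i else 0)
    (hPm : ∀ (x : lp (fun _ : I => ℂ) 2) (i : I), Pm x i = if posIdx J f i then 0 else x i)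
    (hJF : MaxUnifJPos J (LinearMap.range (T.comp Pp : lp (fun _ : I => ℂ) 2 →ₗ[ℂ] H)) ∧
      MaxUnifJNeg J (LinearMap.range (T.comp Pm : lp (fun _ : I => ℂ) 2 →ₗ[ℂ] H)))
    (Tp : H →L[ℂ] lp (fun _ : I => ℂ) 2)
    (hTp : ∀ (x : lp (fun _ : I => ℂ) 2) (y : H), kre J (T x) y = kre (Pp - Pm) x (Tp y)) :
    (∀ x ∈ JorthCompanion J (negSpan J f f), x ≠ 0 → 0 < (kre J (T (Tp x)) x).re) ∧
      (∀ x ∈ JorthCompanion J (posSpan J f f), x ≠ 0 → (kre J (T (Tp x)) x).re < 0) := by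
  obtain ⟨hJsa, hJ2⟩ := hJ
  have hJJ : ∀ z : H, J (J z) = z := by
    intro z
    have := ContinuousLinearMap.ext_iff.mp hJ2 z
    simpa using this
  have hadj : ∀ a b : H, (inner ℂ (J a) b : ℂ) = inner ℂ a (J b) := by
    intro a b
    conv_lhs => rw [← ContinuousLinearMap.isSelfAdjoint_iff'.mp hJsa]
    exact ContinuousLinearMap.adjoint_inner_left J b a
  have hconj : ∀ a b : H, kre J a b = (starRingEnd ℂ) (kre J b a) := by
    intro a b
    simp only [kre]
    rw [← inner_conj_symm, hadj]
  have hsc : ∀ i : I, (starRingEnd ℂ) (sgnv J f i) = sgnv J f i := by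
    intro i; unfold sgnv; split <;> simp
  have hss : ∀ i : I, sgnv J f i * sgnv J f i = 1 := by
    intro i; unfold sgnv; split <;> simp
  -- value of (Tp x) at index i
  have hui : ∀ (x : H) (i : I), (Tp x) i = sgnv J f i * kre J (f i) x := by
    intro x i
    have hsingle : (Pp - Pm) (lp.single 2 i (1:ℂ)) = (sgnv J f i) • lp.single 2 i (1:ℂ) := by
      apply lp.ext
      funext j
      have hs : ((Pp - Pm) (lp.single 2 i (1:ℂ)) : ∀ _, ℂ) j
          = Pp (lp.single 2 i (1:ℂ)) j - Pm (lp.single 2 i (1:ℂ)) j := by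
        rw [ContinuousLinearMap.sub_apply, lp.coeFn_sub]; rfl
      have hsm : ((sgnv J f i • lp.single 2 i (1:ℂ) : lp (fun _ : I => ℂ) 2) : ∀ _, ℂ) j
          = sgnv J f i * ((lp.single 2 i (1:ℂ) : lp (fun _ : I => ℂ) 2) : ∀ _, ℂ) j := by
        rw [lp.coeFn_smul]; rfl
      rw [hs, hsm, hPp, hPm]
      by_cases hji : j = i
      · subst hji
        rw [lp.single_apply_self]
        by_cases hp : posIdx J f j <;> simp [sgnv, hp]
      · rw [lp.single_apply_ne 2 i _ hji]
        by_cases hp : posIdx J f j <;> simp [hp]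
    have h1 : kre J (f i) x = sgnv J f i * (Tp x) i := by
      rw [← hT i, hTp]
      show inner ℂ ((Pp - Pm) (lp.single 2 i (1:ℂ))) (Tp x) = _
      rw [hsingle, inner_smul_left, hsc, lp.inner_single_left]
      simp
    rw [h1, ← mul_assoc, hss, one_mul]
  -- if Tp x = 0 then x = 0
  have hinj : ∀ x : H, Tp x = 0 → x = 0 := by
    intro x h0
    obtain ⟨y, hy⟩ := hTsurj (J x)
    have h1 := hTp y x
    rw [hy, h0] at h1
    simp only [kre, hJJ, inner_zero_right] at h1
    exact inner_self_eq_zero.mp h1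
  -- main value formula
  have hval : ∀ x : H, kre J (T (Tp x)) x
      = inner ℂ (Pp (Tp x)) (Tp x) - inner ℂ (Pm (Tp x)) (Tp x) := by
    intro x
    rw [hTp]
    show inner ℂ ((Pp - Pm) (Tp x)) (Tp x) = _
    rw [ContinuousLinearMap.sub_apply, inner_sub_left]
  constructor
  · -- positive case
    intro x hx hxne
    have hu0 : ∀ i, ¬ posIdx J f i → (Tp x) i = 0 := by
      intro i hi
      have hmem : f i ∈ negSpan J f f :=
        Submodule.le_topologicalClosure _ (Submodule.subset_span ⟨i, hi, rfl⟩)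
      have h1 : kre J x (f i) = 0 := hx _ hmem
      have h2 : kre J (f i) x = 0 := by rw [hconj, h1, map_zero]
      rw [hui, h2, mul_zero]
    have hPmu : Pm (Tp x) = 0 := by
      apply lp.ext
      funext j
      show Pm (Tp x) j = (0 : lp (fun _ : I => ℂ) 2) j
      rw [hPm, lp.coeFn_zero]
      by_cases hp : posIdx J f j
      · simp [hp]
      · simp [hp, hu0 j hp]
    have hPpu : Pp (Tp x) = Tp x := by
      apply lp.ext
      funext j
      show Pp (Tp x) j = (Tp x) j
      rw [hPp]
      by_cases hp : posIdx J f j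
      · simp [hp]
      · simp [hp, hu0 j hp]
    have hval2 : kre J (T (Tp x)) x = inner ℂ (Tp x) (Tp x) := by
      rw [hval, hPmu, hPpu, inner_zero_left, sub_zero]
    rw [hval2]
    have hne : Tp x ≠ 0 := fun h => hxne (hinj x h)
    have : (0:ℝ) < ‖Tp x‖ ^ 2 := pow_pos (norm_pos_iff.mpr hne) 2
    calc (0:ℝ) < ‖Tp x‖ ^ 2 := this
      _ = (inner ℂ (Tp x) (Tp x) : ℂ).re := by
          rw [← RCLike.re_to_complex, inner_self_eq_norm_sq]
  · -- negative case
    intro x hx hxne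
    have hu0 : ∀ i, posIdx J f i → (Tp x) i = 0 := by
      intro i hi
      have hmem : f i ∈ posSpan J f f :=
        Submodule.le_topologicalClosure _ (Submodule.subset_span ⟨i, hi, rfl⟩)
      have h1 : kre J x (f i) = 0 := hx _ hmem
      have h2 : kre J (f i) x = 0 := by rw [hconj, h1, map_zero]
      rw [hui, h2, mul_zero]
    have hPpu : Pp (Tp x) = 0 := by
      apply lp.ext
      funext j
      show Pp (Tp x) j = (0 : lp (fun _ : I => ℂ) 2) j
      rw [hPp, lp.coeFn_zero]
      by_cases hp : posIdx J f j
      · simp [hp, hu0 j hp]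
      · simp [hp]
    have hPmu : Pm (Tp x) = Tp x := by
      apply lp.ext
      funext j
      show Pm (Tp x) j = (Tp x) j
      rw [hPm]
      by_cases hp : posIdx J f j
      · simp [hp, hu0 j hp]
      · simp [hp]
    have hval2 : kre J (T (Tp x)) x = - inner ℂ (Tp x) (Tp x) := by
      rw [hval, hPmu, hPpu, inner_zero_left, zero_sub]
    rw [hval2]
    have hne : Tp x ≠ 0 := fun h => hxne (hinj x h)
    have hpos : (0:ℝ) < ‖Tp x‖ ^ 2 := pow_pos (norm_pos_iff.mpr hne) 2
    have : (-(inner ℂ (Tp x) (Tp x) : ℂ)).re = -(‖Tp x‖ ^ 2) := by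
      rw [Complex.neg_re, ← RCLike.re_to_complex, inner_self_eq_norm_sq]
    rw [this]
    linarith
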